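/- Suppose the set {x ∈ ℝ^n : |Φx| = b} is nonempty and let s := min{‖x‖₀ : |Φx| = b} with s ≥ 1. Let r₀ > 0 be such that every minimizer of ‖x‖₀ over {x : |Φx| = b} satisfies ‖x‖_∞ ≤ r₀ and, for every p ∈ (0,1), every minimizer of ‖x‖_p^p over {x : |Φx| = b} satisfies ‖x‖_∞ ≤ r₀. Let r_m > 0 satisfy r_m ≤ r₀ and: for every ε ∈ {−1,1}^m, every extreme point (x̃, ỹ) of T_ε, and every index k, if ỹ_k ≠ 0 then ỹ_k ≥ r_m. Define p* := 1 if r₀/r_m ≤ (s+1)/s, and p* := (ln(s+1) − ln s)/(ln r₀ − ln r_m) if r₀/r_m > (s+1)/s. Then p* ∈ (0,1] and for every fixed p ∈ (0, p*), every minimizer of ‖x‖_p^p over {x ∈ ℝ^n : |Φx| = b} is also a minimizer of ‖x‖₀ over {x ∈ ℝ^n : |Φx| = b}. -/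

import Mathlib

open Matrix

/-- The set of sign vectors `{−1,1}^m`. -/
def signs (m : ℕ) : Set (Fin m → ℝ) := {ε | ∀ j, ε j = 1 ∨ ε j = -1}

/-- `T_ε = {(x,y) | Φx = b∘ε, |x| ≤ y, ‖x‖_∞ ≤ r₀, 0 ≤ y ≤ r₀·1}`. -/
def Teps {m n : ℕ} (Φ : Matrix (Fin m) (Fin n) ℝ) (b : Fin m → ℝ) (r₀ : ℝ)
    (ε : Fin m → ℝ) : Set ((Fin n → ℝ) × (Fin n → ℝ)) :=
  {q | Φ.mulVec q.1 = (fun j => b j * ε j) ∧ (∀ i, |q.1 i| ≤ q.2 i) ∧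
    ‖q.1‖ ≤ r₀ ∧ ∀ i, 0 ≤ q.2 i ∧ q.2 i ≤ r₀}

/-- `T = ⋃_{ε ∈ {−1,1}^m} T_ε`. -/
def TT {m n : ℕ} (Φ : Matrix (Fin m) (Fin n) ℝ) (b : Fin m → ℝ) (r₀ : ℝ) :
    Set ((Fin n → ℝ) × (Fin n → ℝ)) :=
  ⋃ ε ∈ signs m, Teps Φ b r₀ ε

/-- `‖x‖₀`: the number of nonzero components of `x`. -/
noncomputable def norm0 {n : ℕ} (x : Fin n → ℝ) : ℕ :=
  (Finset.univ.filter (fun i => x i ≠ 0)).card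

/-- Strict concavity of the sum of `p`-th powers. -/
lemma sum_rpow_concave_lt {n : ℕ} {p : ℝ} (hp0 : 0 < p) (hp1 : p < 1)
    {u v : Fin n → ℝ} (hu : ∀ i, 0 ≤ u i) (hv : ∀ i, 0 ≤ v i) (huv : u ≠ v)
    {a c : ℝ} (ha : 0 < a) (hc : 0 < c) (hac : a + c = 1) :
    a * ∑ i, u i ^ p + c * ∑ i, v i ^ p < ∑ i, (a * u i + c * v i) ^ p := by
  rw [Finset.mul_sum, Finset.mul_sum, ← Finset.sum_add_distrib]
  obtain ⟨i0, hi0⟩ := Function.ne_iff.mp huv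
  apply Finset.sum_lt_sum
  · intro i _
    have h := (Real.strictConcaveOn_rpow hp0 hp1).concaveOn.2
      (Set.mem_Ici.mpr (hu i)) (Set.mem_Ici.mpr (hv i)) ha.le hc.le hac
    simpa [smul_eq_mul] using h
  · refine ⟨i0, Finset.mem_univ i0, ?_⟩
    have h := (Real.strictConcaveOn_rpow hp0 hp1).2
      (Set.mem_Ici.mpr (hu i0)) (Set.mem_Ici.mpr (hv i0)) hi0 ha hc hac
    simpa [smul_eq_mul] using h

/-- If a strict convex combination of two points of a half-line `(-∞, X]` equals the
endpoint `X`, both points equal `X`. -/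
lemma combo_eq {a c A B X : ℝ} (ha : 0 < a) (hc : 0 < c) (hac : a + c = 1)
    (hA : A ≤ X) (hB : B ≤ X) (heq : a * A + c * B = X) : A = X ∧ B = X := by
  have h1 : 0 ≤ a * (X - A) := mul_nonneg ha.le (sub_nonneg.2 hA)
  have h2 : 0 ≤ c * (X - B) := mul_nonneg hc.le (sub_nonneg.2 hB)
  have h3 : a * (X - A) + c * (X - B) = 0 := by linear_combination X * hac - heq
  have hA0 : a * (X - A) = 0 := le_antisymm (by linarith) h1
  have hB0 : c * (X - B) = 0 := by linarith
  constructor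
  · have := (mul_eq_zero.mp hA0).resolve_left ha.ne'
    linarith
  · have := (mul_eq_zero.mp hB0).resolve_left hc.ne'
    linarith

theorem stmt_19 {m n : ℕ} (hmn : m ≤ n) (Φ : Matrix (Fin m) (Fin n) ℝ)
    (hrank : Φ.rank = m) (b : Fin m → ℝ) (hb : ∀ j, 0 ≤ b j)
    (s : ℕ) (hs1 : 1 ≤ s)
    (hs : IsLeast {k : ℕ | ∃ x : Fin n → ℝ, (∀ j, |Φ.mulVec x j| = b j) ∧ norm0 x = k} s)
    (r₀ : ℝ) (hr₀ : 0 < r₀)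
    (hbound0 : ∀ x : Fin n → ℝ, (∀ j, |Φ.mulVec x j| = b j) →
      (∀ y : Fin n → ℝ, (∀ j, |Φ.mulVec y j| = b j) → norm0 x ≤ norm0 y) → ‖x‖ ≤ r₀)
    (hboundp : ∀ p : ℝ, 0 < p → p < 1 →
      ∀ x : Fin n → ℝ, (∀ j, |Φ.mulVec x j| = b j) →
      (∀ y : Fin n → ℝ, (∀ j, |Φ.mulVec y j| = b j) →
        ∑ i, |x i| ^ p ≤ ∑ i, |y i| ^ p) → ‖x‖ ≤ r₀)
    (rm : ℝ) (hrm : 0 < rm) (hrmr₀ : rm ≤ r₀)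
    (hext : ∀ ε ∈ signs m, ∀ q ∈ Set.extremePoints ℝ (Teps Φ b r₀ ε),
      ∀ k : Fin n, q.2 k ≠ 0 → rm ≤ q.2 k)
    (pstar : ℝ)
    (hpstar : pstar = if r₀ / rm ≤ ((s : ℝ) + 1) / (s : ℝ) then 1
      else (Real.log ((s : ℝ) + 1) - Real.log (s : ℝ)) /
        (Real.log r₀ - Real.log rm)) :
    (0 < pstar ∧ pstar ≤ 1) ∧
    ∀ p : ℝ, 0 < p → p < pstar →
      ∀ xp : Fin n → ℝ, (∀ j, |Φ.mulVec xp j| = b j) →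
        (∀ y : Fin n → ℝ, (∀ j, |Φ.mulVec y j| = b j) →
          ∑ i, |xp i| ^ p ≤ ∑ i, |y i| ^ p) →
        ∀ y : Fin n → ℝ, (∀ j, |Φ.mulVec y j| = b j) → norm0 xp ≤ norm0 y := by
  have hsR : (0 : ℝ) < s := by exact_mod_cast hs1
  have hfrac1 : (1 : ℝ) < ((s : ℝ) + 1) / s := by
    rw [lt_div_iff₀ hsR]; linarith
  have hRrm : ¬ (r₀ / rm ≤ ((s : ℝ) + 1) / s) → rm < r₀ := by
    intro h
    push_neg at h
    have h1 : 1 < r₀ / rm := lt_trans hfrac1 h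
    exact (one_lt_div hrm).mp h1
  have hp01 : 0 < pstar ∧ pstar ≤ 1 := by
    rw [hpstar]
    split_ifs with h
    · exact ⟨one_pos, le_refl 1⟩
    · have hrr : rm < r₀ := hRrm h
      push_neg at h
      have hD : 0 < Real.log r₀ - Real.log rm := sub_pos.2 (Real.log_lt_log hrm hrr)
      have hN : 0 < Real.log ((s : ℝ) + 1) - Real.log s :=
        sub_pos.2 (Real.log_lt_log hsR (by linarith))
      refine ⟨div_pos hN hD, ?_⟩
      rw [div_le_one hD]
      have hlog : Real.log (((s : ℝ) + 1) / s) < Real.log (r₀ / rm) :=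
        Real.log_lt_log (by positivity) h
      rw [Real.log_div (by positivity) (ne_of_gt hsR),
        Real.log_div (ne_of_gt hr₀) (ne_of_gt hrm)] at hlog
      linarith
  refine ⟨hp01, ?_⟩
  intro p hp hpps xp hxpf hxpm y hyf
  have hp1 : p < 1 := lt_of_lt_of_le hpps hp01.2
  -- key inequality
  have hkey : (r₀ / rm) ^ p < ((s : ℝ) + 1) / s := by
    rw [hpstar] at hpps
    split_ifs at hpps with h
    · calc (r₀ / rm) ^ p ≤ (((s : ℝ) + 1) / s) ^ p :=
            Real.rpow_le_rpow (by positivity) h hp.le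
        _ < (((s : ℝ) + 1) / s) ^ (1 : ℝ) :=
            (Real.rpow_lt_rpow_left_iff hfrac1).mpr hpps
        _ = ((s : ℝ) + 1) / s := Real.rpow_one _
    · have hrr : rm < r₀ := hRrm h
      push_neg at h
      have hD : 0 < Real.log r₀ - Real.log rm := sub_pos.2 (Real.log_lt_log hrm hrr)
      have hlt : p * (Real.log r₀ - Real.log rm) <
          Real.log ((s : ℝ) + 1) - Real.log s := (lt_div_iff₀ hD).mp hpps
      have h1 : (0 : ℝ) < r₀ / rm := by positivity
      have hlog : Real.log ((r₀ / rm) ^ p) < Real.log (((s : ℝ) + 1) / s) := by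
        rw [Real.log_rpow h1, Real.log_div (ne_of_gt hr₀) (ne_of_gt hrm),
          Real.log_div (by positivity) (ne_of_gt hsR)]
        linarith
      exact (Real.log_lt_log_iff (Real.rpow_pos_of_pos h1 p) (by positivity)).mp hlog
  have hrmp : (0 : ℝ) < rm ^ p := Real.rpow_pos_of_pos hrm p
  have hkey2 : (s : ℝ) * r₀ ^ p < ((s : ℝ) + 1) * rm ^ p := by
    rw [Real.div_rpow hr₀.le hrm.le] at hkey
    have := (div_lt_div_iff₀ hrmp hsR).mp hkey
    linarith
  suffices hns : norm0 xp ≤ s by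
    exact le_trans hns (hs.2 ⟨y, hyf, rfl⟩)
  have hxpnorm : ‖xp‖ ≤ r₀ := hboundp p hp hp1 xp hxpf hxpm
  have habs : ∀ i, |xp i| ≤ r₀ := fun i =>
    le_trans (by simpa [Real.norm_eq_abs] using norm_le_pi_norm xp i) hxpnorm
  set ε : Fin m → ℝ := fun j => if 0 ≤ Φ.mulVec xp j then 1 else -1 with hε
  have hεs : ε ∈ signs m := by
    intro j
    by_cases h : 0 ≤ Φ.mulVec xp j <;> simp [hε, h]
  have hΦxp : Φ.mulVec xp = fun j => b j * ε j := by
    funext j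
    by_cases h : 0 ≤ Φ.mulVec xp j
    · simp only [hε, if_pos h, mul_one]
      rw [← hxpf j, abs_of_nonneg h]
    · simp only [hε, if_neg h, mul_neg_one]
      push_neg at h
      rw [← hxpf j, abs_of_neg h, neg_neg]
  set q : (Fin n → ℝ) × (Fin n → ℝ) := (xp, fun i => |xp i|) with hq
  have hqT : q ∈ Teps Φ b r₀ ε :=
    ⟨hΦxp, fun i => le_refl _, hxpnorm, fun i => ⟨abs_nonneg _, habs i⟩⟩
  have hfeas : ∀ z ∈ Teps Φ b r₀ ε, ∀ j, |Φ.mulVec z.1 j| = b j := by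
    intro z hz j
    rw [congrFun hz.1 j]
    rcases hεs j with h | h <;> rw [h] <;>
      simp [abs_of_nonneg (hb j), abs_mul, abs_of_nonneg (hb j)]
  have hzmin : ∀ z ∈ Teps Φ b r₀ ε, ∑ i, |xp i| ^ p ≤ ∑ i, z.2 i ^ p := by
    intro z hz
    calc ∑ i, |xp i| ^ p ≤ ∑ i, |z.1 i| ^ p := hxpm z.1 (hfeas z hz)
      _ ≤ ∑ i, z.2 i ^ p :=
        Finset.sum_le_sum fun i _ => Real.rpow_le_rpow (abs_nonneg _) (hz.2.1 i) hp.le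
  have hqext : q ∈ Set.extremePoints ℝ (Teps Φ b r₀ ε) := by
    refine ⟨hqT, ?_⟩
    rintro ⟨x1, y1⟩ hq1 ⟨x2, y2⟩ hq2 ⟨a, c, ha, hc, hac, heq⟩
    rw [Prod.smul_mk, Prod.smul_mk, Prod.mk_add_mk, Prod.mk.injEq] at heq
    obtain ⟨hx, hy⟩ := heq
    have hyi : ∀ i, a * y1 i + c * y2 i = |xp i| := by
      intro i
      have := congrFun hy i
      simpa [smul_eq_mul] using this
    have hxi : ∀ i, a * x1 i + c * x2 i = xp i := by
      intro i
      have := congrFun hx i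
      simpa [smul_eq_mul] using this
    by_cases hyy : y1 = y2
    · subst hyy
      have hy1 : ∀ i, y1 i = |xp i| := by
        intro i
        calc y1 i = (a + c) * y1 i := by rw [hac, one_mul]
          _ = |xp i| := by rw [add_mul]; exact hyi i
      have hx12 : ∀ i, x1 i = xp i ∧ x2 i = xp i := by
        intro i
        have hb1 : |x1 i| ≤ |xp i| := (hq1.2.1 i).trans_eq (hy1 i)
        have hb2 : |x2 i| ≤ |xp i| := (hq2.2.1 i).trans_eq (hy1 i)
        rcases abs_le.mp hb1 with ⟨hb1l, hb1r⟩
        rcases abs_le.mp hb2 with ⟨hb2l, hb2r⟩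
        have hxieq := hxi i
        rcases le_or_gt 0 (xp i) with hsgn | hsgn
        · rw [abs_of_nonneg hsgn] at hb1r hb2r
          exact combo_eq ha hc hac hb1r hb2r hxieq
        · rw [abs_of_neg hsgn] at hb1l hb2l
          have h1 : -x1 i ≤ -xp i := by linarith
          have h2 : -x2 i ≤ -xp i := by linarith
          have heq' : a * (-x1 i) + c * (-x2 i) = -xp i := by linear_combination -hxieq
          obtain ⟨e1, e2⟩ := combo_eq ha hc hac h1 h2 heq'
          constructor <;> linarith
      · simp only [hq, Prod.mk.injEq]
        exact ⟨funext fun i => (hx12 i).1, funext hy1⟩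
    · exfalso
      have hy1n : ∀ i, 0 ≤ y1 i := fun i => (hq1.2.2.2 i).1
      have hy2n : ∀ i, 0 ≤ y2 i := fun i => (hq2.2.2.2 i).1
      have hlt := sum_rpow_concave_lt hp hp1 hy1n hy2n hyy ha hc hac
      have hrw : (∑ i, (a * y1 i + c * y2 i) ^ p) = ∑ i, |xp i| ^ p := by
        apply Finset.sum_congr rfl
        intro i _
        rw [hyi i]
      rw [hrw] at hlt
      have h1 := hzmin _ hq1
      have h2 := hzmin _ hq2
      simp only at h1 h2
      have h1' := mul_le_mul_of_nonneg_left h1 ha.le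
      have h2' := mul_le_mul_of_nonneg_left h2 hc.le
      have hS : a * (∑ i, |xp i| ^ p) + c * (∑ i, |xp i| ^ p) = ∑ i, |xp i| ^ p := by
        rw [← add_mul, hac, one_mul]
      linarith
  have habslow : ∀ i, xp i ≠ 0 → rm ≤ |xp i| := by
    intro i hi
    have := hext ε hεs q hqext i
    simp only [hq] at this
    exact this (abs_ne_zero.mpr hi)
  -- lower bound
  have hlow : (norm0 xp : ℝ) * rm ^ p ≤ ∑ i, |xp i| ^ p := by
    have step1 : (norm0 xp : ℝ) * rm ^ p =
        ∑ _i ∈ Finset.univ.filter (fun i => xp i ≠ 0), rm ^ p := by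
      rw [Finset.sum_const, nsmul_eq_mul, norm0]
    rw [step1]
    calc (∑ _i ∈ Finset.univ.filter (fun i => xp i ≠ 0), rm ^ p)
        ≤ ∑ i ∈ Finset.univ.filter (fun i => xp i ≠ 0), |xp i| ^ p := by
          apply Finset.sum_le_sum
          intro i hi
          rw [Finset.mem_filter] at hi
          exact Real.rpow_le_rpow hrm.le (habslow i hi.2) hp.le
      _ ≤ ∑ i, |xp i| ^ p :=
          Finset.sum_le_sum_of_subset_of_nonneg (Finset.filter_subset _ _)
            (fun i _ _ => Real.rpow_nonneg (abs_nonneg _) p)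
  -- upper bound
  have hup : ∑ i, |xp i| ^ p ≤ (s : ℝ) * r₀ ^ p := by
    obtain ⟨x0, hx0f, hx0c⟩ := hs.1
    have hx0min : ∀ z : Fin n → ℝ, (∀ j, |Φ.mulVec z j| = b j) → norm0 x0 ≤ norm0 z := by
      intro z hz
      rw [hx0c]
      exact hs.2 ⟨z, hz, rfl⟩
    have hx0n : ‖x0‖ ≤ r₀ := hbound0 x0 hx0f hx0min
    have h0abs : ∀ i, |x0 i| ≤ r₀ := fun i =>
      le_trans (by simpa [Real.norm_eq_abs] using norm_le_pi_norm x0 i) hx0n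
    calc ∑ i, |xp i| ^ p ≤ ∑ i, |x0 i| ^ p := hxpm x0 hx0f
      _ = ∑ i ∈ Finset.univ.filter (fun i => x0 i ≠ 0), |x0 i| ^ p := by
          refine (Finset.sum_subset (Finset.filter_subset _ _) ?_).symm
          intro i _ hi
          simp only [Finset.mem_filter, Finset.mem_univ, true_and, not_not] at hi
          rw [hi, abs_zero, Real.zero_rpow hp.ne']
      _ ≤ ∑ _i ∈ Finset.univ.filter (fun i => x0 i ≠ 0), r₀ ^ p :=
          Finset.sum_le_sum fun i _ => Real.rpow_le_rpow (abs_nonneg _) (h0abs i) hp.le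
      _ = (norm0 x0 : ℝ) * r₀ ^ p := by rw [Finset.sum_const, nsmul_eq_mul, norm0]
      _ = (s : ℝ) * r₀ ^ p := by rw [hx0c]
  have hfin : (norm0 xp : ℝ) * rm ^ p < ((s : ℝ) + 1) * rm ^ p := by
    calc (norm0 xp : ℝ) * rm ^ p ≤ ∑ i, |xp i| ^ p := hlow
      _ ≤ (s : ℝ) * r₀ ^ p := hup
      _ < ((s : ℝ) + 1) * rm ^ p := hkey2
  have : (norm0 xp : ℝ) < (s : ℝ) + 1 := lt_of_mul_lt_mul_right hfin hrmp.le
  have : norm0 xp < s + 1 := by exact_mod_cast this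
  omega
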